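/- Let U, V be positive definite d×d complex matrices such that I ≤ V^{1/2} U V^{1/2}. Set N = U^{-1/2} V⁻¹ U^{-1/2}. Then 0 < N ≤ I, and the matrices W₁ = U^{1/2}(I + (I−N)^{1/2})U^{1/2} and W₂ = U^{1/2}(I − (I−N)^{1/2})U^{1/2} are positive definite and satisfy U = (W₁ + W₂)/2 and V = (W₁⁻¹ + W₂⁻¹)/2. -/

import Mathlib

open scoped ComplexOrder Matrix

/-- `Matrix.PosSemidef.sqrt` was removed from Mathlib; restored with its old definition. -/
noncomputable def Matrix.PosSemidef.sqrt {n 𝕜 : Type*} [Fintype n] [DecidableEq n] [RCLike 𝕜]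
    {A : Matrix n n 𝕜} (hA : A.PosSemidef) : Matrix n n 𝕜 :=
  hA.1.eigenvectorUnitary.1 * Matrix.diagonal ((↑) ∘ (√·) ∘ hA.1.eigenvalues) *
    (star hA.1.eigenvectorUnitary : Matrix n n 𝕜)

open scoped MatrixOrder in
private lemma Matrix.PosSemidef.sqrt_eq_cfcSqrt {n : Type*} [Fintype n] [DecidableEq n]
    {A : Matrix n n ℂ} (hA : A.PosSemidef) : hA.sqrt = CFC.sqrt A := by
  rw [CFC.sqrt_eq_cfc, cfc_nnreal_eq_real _ A, hA.1.cfc_eq]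
  simp only [Matrix.IsHermitian.cfc, Matrix.PosSemidef.sqrt, Unitary.conjStarAlgAut_apply]
  congr 3
  funext i
  simp [Real.coe_sqrt, Real.coe_toNNReal', max_eq_left (hA.eigenvalues_nonneg i)]

open scoped MatrixOrder in
private lemma Matrix.PosSemidef.posSemidef_sqrt {n : Type*} [Fintype n] [DecidableEq n]
    {A : Matrix n n ℂ} (hA : A.PosSemidef) : hA.sqrt.PosSemidef := by
  rw [hA.sqrt_eq_cfcSqrt, ← Matrix.nonneg_iff_posSemidef]
  exact CFC.sqrt_nonneg A

open scoped MatrixOrder in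
private lemma Matrix.PosSemidef.sqrt_mul_self {n : Type*} [Fintype n] [DecidableEq n]
    {A : Matrix n n ℂ} (hA : A.PosSemidef) : hA.sqrt * hA.sqrt = A := by
  rw [hA.sqrt_eq_cfcSqrt]
  exact CFC.sqrt_mul_sqrt_self A (Matrix.nonneg_iff_posSemidef.2 hA)

open scoped MatrixOrder in
private lemma Matrix.PosSemidef.eq_sqrt_of_sq_eq {n : Type*} [Fintype n] [DecidableEq n]
    {A B : Matrix n n ℂ} (hA : A.PosSemidef) (hB : B.PosSemidef) (hAB : A ^ 2 = B) :
    A = hB.sqrt := by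
  rw [hB.sqrt_eq_cfcSqrt]
  exact (CFC.sqrt_unique (by rw [← hAB, pow_two]) (Matrix.nonneg_iff_posSemidef.2 hA)).symm

open Matrix in
private lemma posDef_of_posSemidef_isUnit {n : Type*} [Fintype n] [DecidableEq n]
    {A : Matrix n n ℂ} (hA : A.PosSemidef) (h : IsUnit A) : A.PosDef := by
  rw [Matrix.posDef_iff_dotProduct_mulVec]
  refine ⟨hA.1, fun x hx => lt_of_le_of_ne (hA.dotProduct_mulVec_nonneg x) fun h0 => hx ?_⟩
  have hz : A *ᵥ x = 0 := (hA.dotProduct_mulVec_zero_iff x).mp h0.symm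
  have hinj := Matrix.mulVec_injective_iff_isUnit.mpr h
  simpa using hinj (hz.trans (Matrix.mulVec_zero A).symm)

open Matrix in
private lemma isUnit_conjT {n : Type*} [Fintype n] [DecidableEq n]
    {B : Matrix n n ℂ} (hB : IsUnit B) : IsUnit Bᴴ := by
  rw [Matrix.isUnit_iff_isUnit_det, Matrix.det_conjTranspose]
  exact ((Matrix.isUnit_iff_isUnit_det _).1 hB).star

open Matrix in
private lemma posDef_conj {n : Type*} [Fintype n] [DecidableEq n]
    {A B : Matrix n n ℂ} (hA : A.PosDef) (hB : IsUnit B) : (B * A * Bᴴ).PosDef :=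
  posDef_of_posSemidef_isUnit (hA.posSemidef.mul_mul_conjTranspose_same B)
    ((hB.mul hA.isUnit).mul (isUnit_conjT hB))

open Matrix in
private lemma sqrt_posDef {n : Type*} [Fintype n] [DecidableEq n]
    {A : Matrix n n ℂ} (hA : A.PosDef) : hA.posSemidef.sqrt.PosDef := by
  apply posDef_of_posSemidef_isUnit hA.posSemidef.posSemidef_sqrt
  rw [Matrix.isUnit_iff_isUnit_det]
  have h2 : hA.posSemidef.sqrt.det * hA.posSemidef.sqrt.det = A.det := by
    rw [← Matrix.det_mul, hA.posSemidef.sqrt_mul_self]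
  have h3 : IsUnit (hA.posSemidef.sqrt.det * hA.posSemidef.sqrt.det) :=
    h2 ▸ hA.det_pos.ne'.isUnit
  exact isUnit_of_mul_isUnit_left h3

open Matrix in
private lemma sqrt_inv_eq {n : Type*} [Fintype n] [DecidableEq n]
    {A : Matrix n n ℂ} (hA : A.PosDef) :
    hA.inv.posSemidef.sqrt = hA.posSemidef.sqrt⁻¹ := by
  have hQ : (hA.posSemidef.sqrt).PosDef := sqrt_posDef hA
  refine ((hQ.inv.posSemidef).eq_sqrt_of_sq_eq hA.inv.posSemidef ?_).symm
  rw [pow_two, ← Matrix.mul_inv_rev, hA.posSemidef.sqrt_mul_self]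

private lemma half_pos_c {z : ℂ} (hz : 0 < z) : 0 < (1 / 2 : ℂ) * z := by
  rw [Complex.lt_def] at hz ⊢
  simp only [Complex.zero_re, Complex.zero_im] at hz ⊢
  constructor
  · simp only [Complex.mul_re]
    norm_num
    linarith [hz.1]
  · simp only [Complex.mul_im]
    norm_num
    simp [← hz.2]

open Matrix in
private lemma half_smul_posDef {n : Type*} [Fintype n]
    {A : Matrix n n ℂ} (hA : A.PosDef) : ((1 / 2 : ℂ) • A).PosDef := by
  rw [Matrix.posDef_iff_dotProduct_mulVec]
  constructor
  · show ((1 / 2 : ℂ) • A)ᴴ = _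
    rw [Matrix.conjTranspose_smul, hA.1.eq]
    norm_num
  · intro x hx
    have := hA.dotProduct_mulVec_pos hx
    rw [Matrix.smul_mulVec, dotProduct_smul, smul_eq_mul]
    exact half_pos_c this

set_option maxHeartbeats 1000000 in
theorem stmt_9 {d : ℕ} (U V : Matrix (Fin d) (Fin d) ℂ)
    (hU : U.PosDef) (hV : V.PosDef)
    (h : (hV.posSemidef.sqrt * U * hV.posSemidef.sqrt - 1).PosSemidef)
    (N : Matrix (Fin d) (Fin d) ℂ)
    (hN : N = hU.inv.posSemidef.sqrt * V⁻¹ * hU.inv.posSemidef.sqrt) :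
    N.PosDef ∧ (1 - N).PosSemidef ∧
      ∀ S : Matrix (Fin d) (Fin d) ℂ, S.PosSemidef → S * S = 1 - N →
        ∀ W₁ W₂ : Matrix (Fin d) (Fin d) ℂ,
          W₁ = hU.posSemidef.sqrt * (1 + S) * hU.posSemidef.sqrt →
          W₂ = hU.posSemidef.sqrt * (1 - S) * hU.posSemidef.sqrt →
          W₁.PosDef ∧ W₂.PosDef ∧
            U = (1 / 2 : ℂ) • (W₁ + W₂) ∧ V = (1 / 2 : ℂ) • (W₁⁻¹ + W₂⁻¹) := by
  classical
  set Q : Matrix (Fin d) (Fin d) ℂ := hU.posSemidef.sqrt with hQdef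
  set R : Matrix (Fin d) (Fin d) ℂ := hV.posSemidef.sqrt with hRdef
  have hQpd : Q.PosDef := sqrt_posDef hU
  have hRpd : R.PosDef := sqrt_posDef hV
  have hQQ : Q * Q = U := hU.posSemidef.sqrt_mul_self
  have hRR : R * R = V := hV.posSemidef.sqrt_mul_self
  have hdQ : IsUnit Q.det := hQpd.det_pos.ne'.isUnit
  have hdR : IsUnit R.det := hRpd.det_pos.ne'.isUnit
  have hdV : IsUnit V.det := hV.det_pos.ne'.isUnit
  have hQiH : (Q⁻¹)ᴴ = Q⁻¹ := hQpd.inv.isHermitian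
  have hRiH : (R⁻¹)ᴴ = R⁻¹ := hRpd.inv.isHermitian
  have hNQ : N = Q⁻¹ * V⁻¹ * Q⁻¹ := by rw [hN, sqrt_inv_eq hU]
  -- N is positive definite
  have hNpd : N.PosDef := by
    have hc := posDef_conj hV.inv ((Matrix.isUnit_nonsing_inv_iff).2
      ((Matrix.isUnit_iff_isUnit_det _).2 hdQ))
    rw [hQiH] at hc
    rw [hNQ]; exact hc
  have hdN : IsUnit N.det := hNpd.det_pos.ne'.isUnit
  -- U - V⁻¹ is positive semidefinite
  have hUV : (U - V⁻¹).PosSemidef := by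
    have h2 := h.conjTranspose_mul_mul_same R⁻¹
    rw [hRiH] at h2
    have e : R⁻¹ * (R * U * R - 1) * R⁻¹ = U - V⁻¹ := by
      rw [Matrix.mul_sub, Matrix.sub_mul, Matrix.mul_one]
      congr 1
      · simp only [Matrix.mul_assoc]
        rw [Matrix.mul_nonsing_inv _ hdR, Matrix.mul_one,
          Matrix.nonsing_inv_mul_cancel_left _ _ hdR]
      · rw [← Matrix.mul_inv_rev, hRR]
    rw [e] at h2; exact h2
  -- 1 - N is positive semidefinite
  have h1N : (1 - N).PosSemidef := by
    have h2 := hUV.conjTranspose_mul_mul_same Q⁻¹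
    rw [hQiH] at h2
    have e : Q⁻¹ * (U - V⁻¹) * Q⁻¹ = 1 - N := by
      rw [Matrix.mul_sub, Matrix.sub_mul, hNQ]
      congr 1
      rw [← hQQ]
      simp only [Matrix.mul_assoc]
      rw [Matrix.mul_nonsing_inv _ hdQ, Matrix.mul_one,
        Matrix.nonsing_inv_mul _ hdQ]
    rw [e] at h2; exact h2
  refine ⟨hNpd, h1N, ?_⟩
  intro S hS hS2 W₁ W₂ hW₁ hW₂
  have hNe : N = 1 - S * S := by rw [hS2, sub_sub_cancel]
  have hSH : Sᴴ = S := hS.1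
  have h1pS : (1 + S).PosDef := Matrix.PosDef.add_posSemidef Matrix.PosDef.one hS
  -- (1 - S) is positive definite
  have h1mH : (1 - S).IsHermitian := by
    show (1 - S)ᴴ = 1 - S
    rw [Matrix.conjTranspose_sub, Matrix.conjTranspose_one, hSH]
  have hsq : ((1 - S) * (1 - S)).PosSemidef := by
    have := Matrix.posSemidef_conjTranspose_mul_self (1 - S)
    rwa [h1mH.eq] at this
  have hsumpd : ((1 - S) + (1 - S)).PosDef := by
    have e : N + (1 - S) * (1 - S) = (1 - S) + (1 - S) := by
      rw [hNe]; noncomm_ring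
    exact e ▸ hNpd.add_posSemidef hsq
  have hhalf : ∀ X : Matrix (Fin d) (Fin d) ℂ, (1 / 2 : ℂ) • (X + X) = X := by
    intro X
    rw [← two_smul ℂ X, smul_smul]
    norm_num
  have h1mS : (1 - S).PosDef := by
    have := half_smul_posDef hsumpd
    rwa [hhalf] at this
  -- W₁, W₂ are positive definite
  have hQH : Qᴴ = Q := hQpd.isHermitian
  have hQunit : IsUnit Q := (Matrix.isUnit_iff_isUnit_det _).2 hdQ
  have hW₁pd : W₁.PosDef := by
    have := posDef_conj h1pS hQunit
    rw [hQH] at this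
    rw [hW₁]; exact this
  have hW₂pd : W₂.PosDef := by
    have := posDef_conj h1mS hQunit
    rw [hQH] at this
    rw [hW₂]; exact this
  refine ⟨hW₁pd, hW₂pd, ?_, ?_⟩
  · rw [hW₁, hW₂]
    have e : Q * (1 + S) * Q + Q * (1 - S) * Q = U + U := by
      rw [← hQQ]; noncomm_ring
    rw [e, hhalf]
  · -- V = (1/2) • (W₁⁻¹ + W₂⁻¹)
    have hd1p : IsUnit (1 + S).det := h1pS.det_pos.ne'.isUnit
    have hd1m : IsUnit (1 - S).det := h1mS.det_pos.ne'.isUnit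
    have hfac1 : N = (1 - S) * (1 + S) := by rw [hNe]; noncomm_ring
    have hfac2 : N = (1 + S) * (1 - S) := by rw [hNe]; noncomm_ring
    have e1 : N * (1 + S)⁻¹ = 1 - S := by
      conv_lhs => rw [hfac1]
      exact Matrix.mul_nonsing_inv_cancel_right _ _ hd1p
    have e2 : N * (1 - S)⁻¹ = 1 + S := by
      conv_lhs => rw [hfac2]
      exact Matrix.mul_nonsing_inv_cancel_right _ _ hd1m
    have hsum_inv : (1 + S)⁻¹ + (1 - S)⁻¹ = N⁻¹ + N⁻¹ := by
      calc (1 + S)⁻¹ + (1 - S)⁻¹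
          = N⁻¹ * (N * ((1 + S)⁻¹ + (1 - S)⁻¹)) :=
            (Matrix.nonsing_inv_mul_cancel_left _ _ hdN).symm
        _ = N⁻¹ * (1 + 1) := by
            rw [Matrix.mul_add, e1, e2]
            congr 1
            noncomm_ring
        _ = N⁻¹ + N⁻¹ := by rw [Matrix.mul_add, Matrix.mul_one]
    have hNinv : N⁻¹ = Q * (V * Q) := by
      rw [hNQ, Matrix.mul_inv_rev, Matrix.mul_inv_rev,
        Matrix.nonsing_inv_nonsing_inv _ hdQ, Matrix.nonsing_inv_nonsing_inv _ hdV]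
    have hVeq : Q⁻¹ * (N⁻¹ * Q⁻¹) = V := by
      rw [hNinv]
      simp only [Matrix.mul_assoc]
      rw [Matrix.mul_nonsing_inv _ hdQ, Matrix.mul_one,
        Matrix.nonsing_inv_mul_cancel_left _ _ hdQ]
    rw [hW₁, hW₂, Matrix.mul_inv_rev, Matrix.mul_inv_rev, Matrix.mul_inv_rev,
      Matrix.mul_inv_rev]
    have e : Q⁻¹ * ((1 + S)⁻¹ * Q⁻¹) + Q⁻¹ * ((1 - S)⁻¹ * Q⁻¹) = V + V := by
      rw [← Matrix.mul_add, ← Matrix.add_mul, hsum_inv, Matrix.add_mul,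
        Matrix.mul_add, hVeq]
    rw [e, hhalf]
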